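/- Let β ∈ (0,1) and A₁ ∈ (0, 1/(1+β)), and let ξ₊ > 0 be defined by cosh ξ₊ = (1 + √(1 − 4βA₁²))/(2βA₁). Then cosh ξ − βA₁ cosh²ξ − A₁ > 0 for every ξ ∈ (−ξ₊, ξ₊), and (1/√a) · ∫_{−ξ₊}^{ξ₊} dξ/√(cosh ξ − βA₁ cosh²ξ − A₁) = T₁(β,A₁); that is, the period of the one-dimensional motion (ξ')² = 4a(cosh ξ − βA₁ cosh²ξ − A₁) between its inversion points ±ξ₊ equals 2√(2/a)·(1−4βA₁²)^{−1/4}·K(κ₁(β,A₁)). -/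

import Mathlib

open Real Filter Topology
open MeasureTheory Set

/-- The complete elliptic integral of the first kind,
`K(κ) = ∫₀¹ dv / √((1 - v²)(1 - κ² v²))`. -/
noncomputable def K (κ : ℝ) : ℝ :=
  ∫ v in (0:ℝ)..1, 1 / Real.sqrt ((1 - v ^ 2) * (1 - κ ^ 2 * v ^ 2))

set_option maxHeartbeats 4000000 in
/-- Core computation: the period integral in normalized variables. -/
lemma core_integral (b s ξp k A : ℝ) (hb : 0 < b) (hs0 : 0 < s) (hs1 : s < 1)
    (h2b : 2 * b < 1) (hmb : 1 - s < 2 * b) (hξp : 0 < ξp)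
    (hA4 : 4 * b * A = 1 - s ^ 2)
    (hcosh : Real.cosh ξp = (1 + s) / (2 * b)) (hk0 : 0 ≤ k)
    (hk2 : k ^ 2 = (A - b + s) / (2 * s)) :
    (∫ ξ in -ξp..ξp, 1 / Real.sqrt (Real.cosh ξ - b * Real.cosh ξ ^ 2 - A))
      = 2 * Real.sqrt (2 / s) * K k := by
  have hbne : b ≠ 0 := ne_of_gt hb
  have hsne : s ≠ 0 := ne_of_gt hs0
  have hAeq : A = (1 - s ^ 2) / (4 * b) := by
    field_simp
    linarith [hA4]
  have hA0 : 0 < A := by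
    rw [hAeq]
    apply div_pos (by nlinarith) (by linarith)
  -- auxiliary quantities
  obtain ⟨cp, hcpdef⟩ : ∃ x : ℝ, x = (1 + s) / (2 * b) := ⟨_, rfl⟩
  obtain ⟨cm, hcmdef⟩ : ∃ x : ℝ, x = (1 - s) / (2 * b) := ⟨_, rfl⟩
  obtain ⟨p, hpdef⟩ : ∃ x : ℝ, x = 1 + s - 2 * b := ⟨_, rfl⟩
  obtain ⟨m, hmdef⟩ : ∃ x : ℝ, x = s - 1 + 2 * b := ⟨_, rfl⟩
  rw [← hcpdef] at hcosh
  have hp0 : 0 < p := by rw [hpdef]; linarith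
  have hm0 : 0 < m := by rw [hmdef]; linarith
  have hcm1 : cm < 1 := by
    rw [hcmdef, div_lt_one (by linarith)]; linarith
  have hcp1 : 1 < cp := by
    rw [hcpdef, lt_div_iff₀ (by linarith)]; linarith
  obtain ⟨d, hddef⟩ : ∃ f : ℝ → ℝ, f = fun v => 2 * s - p * v ^ 2 := ⟨_, rfl⟩
  obtain ⟨c, hcdef⟩ : ∃ f : ℝ → ℝ, f = fun v => cm + s * m / (b * d v) := ⟨_, rfl⟩
  obtain ⟨c', hc'def⟩ : ∃ f : ℝ → ℝ, f = fun v => 2 * s * m * p * v / (b * (d v) ^ 2) :=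
    ⟨_, rfl⟩
  have hdpos : ∀ v : ℝ, v ^ 2 ≤ 1 → 0 < d v := by
    intro v hv
    simp only [hddef]
    nlinarith [mul_le_of_le_one_right hp0.le hv]
  have hdIoo : ∀ v ∈ Ioo (0:ℝ) 1, 0 < d v := by
    intro v hv
    exact hdpos v (by nlinarith [hv.1, hv.2])
  -- factorization of the quadratic
  have hqfact : ∀ x : ℝ, x - b * x ^ 2 - A = b * ((cp - x) * (x - cm)) := by
    intro x
    rw [hAeq, hcpdef, hcmdef]
    field_simp
    ring
  have hqpos : ∀ x : ℝ, 1 ≤ x → x < cp → 0 < x - b * x ^ 2 - A := by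
    intro x h1 h2
    rw [hqfact]
    exact mul_pos hb (mul_pos (by linarith) (by linarith))
  -- identities for the rational map c
  have hid1 : ∀ v : ℝ, d v ≠ 0 → c v - 1 = m * p * v ^ 2 / (2 * b * d v) := by
    intro v hdv
    simp only [hcdef, hcmdef]
    simp only [hddef] at hdv ⊢
    rw [hpdef, hmdef] at *
    rw [div_add_div _ _ (by positivity) (mul_ne_zero hbne hdv), div_sub_one (by positivity), div_eq_div_iff (by positivity) (by positivity)]
    ring
  have hid2 : ∀ v : ℝ, d v ≠ 0 → cp - c v = s * p * (1 - v ^ 2) / (b * d v) := by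
    intro v hdv
    simp only [hcdef, hcmdef, hcpdef]
    simp only [hddef] at hdv ⊢
    rw [hpdef, hmdef] at *
    rw [div_add_div _ _ (by positivity) (mul_ne_zero hbne hdv), div_sub_div _ _ (by positivity) (by positivity), div_eq_div_iff (by positivity) (mul_ne_zero hbne hdv)]
    ring
  have hcv1 : ∀ v ∈ Ioo (0:ℝ) 1, 1 < c v := by
    intro v hv
    have hdv := hdIoo v hv
    have h := hid1 v hdv.ne'
    have hpos : 0 < m * p * v ^ 2 / (2 * b * d v) :=
      div_pos (mul_pos (mul_pos hm0 hp0) (pow_pos hv.1 2)) (by positivity)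
    linarith
  have hcvcp : ∀ v ∈ Ioo (0:ℝ) 1, c v < cp := by
    intro v hv
    have hdv := hdIoo v hv
    have h := hid2 v hdv.ne'
    have hv2 : v ^ 2 < 1 := by nlinarith [hv.1, hv.2]
    have hpos : 0 < s * p * (1 - v ^ 2) / (b * d v) :=
      div_pos (mul_pos (mul_pos hs0 hp0) (by linarith)) (by positivity)
    linarith
  have hd0 : d 0 = 2 * s := by simp [hddef]
  have hd1 : d 1 = m := by rw [hddef, hpdef, hmdef]; ring
  have hc0 : c 0 = 1 := by
    rw [hcdef]
    simp only [hd0]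
    rw [hcmdef, hmdef]
    field_simp
    ring
  have hc1 : c 1 = cp := by
    rw [hcdef]
    simp only [hd1]
    rw [hcmdef, hcpdef]
    have hmne : m ≠ 0 := hm0.ne'
    field_simp
    ring
  -- the derivative of c
  have hderiv : ∀ v ∈ Ioo (0:ℝ) 1, HasDerivWithinAt c (c' v) (Ioo (0:ℝ) 1) v := by
    intro v hv
    have hdv : d v ≠ 0 := (hdIoo v hv).ne'
    have hdv' : b * d v ≠ 0 := mul_ne_zero hbne hdv
    have h1 : HasDerivAt (fun w : ℝ => b * d w) (b * (-(p * (2 * v)))) v := by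
      rw [hddef]
      have := (((hasDerivAt_pow 2 v).const_mul p).const_sub (2 * s)).const_mul b
      refine this.congr_deriv ?_
      norm_num
    have h2 : HasDerivAt (fun w : ℝ => s * m / (b * d w))
        ((0 * (b * d v) - s * m * (b * (-(p * (2 * v))))) / (b * d v) ^ 2) v :=
      (hasDerivAt_const v (s * m)).div h1 hdv'
    have h3 : HasDerivAt c (c' v) v := by
      rw [hcdef]
      have := h2.const_add cm
      refine this.congr_deriv ?_
      rw [hc'def]
      field_simp
      ring
    exact h3.hasDerivWithinAt
  -- injectivity of c
  have hinj : InjOn c (Ioo (0:ℝ) 1) := by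
    intro x hx y hy hxy
    have hdx : 0 < d x := hdIoo x hx
    have hdy : 0 < d y := hdIoo y hy
    have h1 : s * m / (b * d x) = s * m / (b * d y) := by
      have h := hxy
      simp only [hcdef] at h
      linarith
    rw [div_eq_div_iff (mul_pos hb hdx).ne' (mul_pos hb hdy).ne'] at h1
    have h2 : b * d y = b * d x :=
      mul_left_cancel₀ (mul_pos hs0 hm0).ne'
        (by linear_combination h1 : (s * m) * (b * d y) = (s * m) * (b * d x))
    have h2' : d y = d x := mul_left_cancel₀ hbne h2
    have h3 : x ^ 2 = y ^ 2 := by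
      simp only [hddef] at h2'
      have h4 : p * x ^ 2 = p * y ^ 2 := by linarith
      exact mul_left_cancel₀ hp0.ne' h4
    have h5 : (x - y) * (x + y) = 0 := by linear_combination h3
    rcases mul_eq_zero.mp h5 with h | h
    · linarith
    · linarith [hx.1, hy.1]
  
  -- continuity and image of c
  have hdcont : Continuous fun v : ℝ => b * d v := by
    simp only [hddef]
    exact continuous_const.mul (continuous_const.sub (continuous_const.mul (continuous_pow 2)))
  have hdne' : ∀ v ∈ Icc (0:ℝ) 1, b * d v ≠ 0 := by
    intro v hv
    have h1 : v ^ 2 ≤ 1 := by nlinarith [hv.1, hv.2]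
    exact (mul_pos hb (hdpos v h1)).ne'
  have hccont : ContinuousOn c (Icc (0:ℝ) 1) := by
    rw [hcdef]
    exact continuousOn_const.add
      (ContinuousOn.div continuousOn_const hdcont.continuousOn hdne')
  have himage : c '' Ioo 0 1 = Ioo 1 cp := by
    apply Subset.antisymm
    · rintro x ⟨v, hv, rfl⟩
      exact ⟨hcv1 v hv, hcvcp v hv⟩
    · have h := intermediate_value_Ioo (by norm_num : (0:ℝ) ≤ 1) hccont
      rw [hc0, hc1] at h
      exact h
  -- image and injectivity of cosh
  have hcoshim : Real.cosh '' Ioo 0 ξp = Ioo 1 cp := by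
    apply Subset.antisymm
    · rintro x ⟨ξ, hξ, rfl⟩
      constructor
      · exact Real.one_lt_cosh.mpr hξ.1.ne'
      · rw [← hcosh]
        apply Real.cosh_lt_cosh.mpr
        rw [abs_of_pos hξ.1, abs_of_pos hξp]
        exact hξ.2
    · have h := intermediate_value_Ioo hξp.le Real.continuous_cosh.continuousOn
      rw [Real.cosh_zero, hcosh] at h
      exact h
  have hcoshinj : InjOn Real.cosh (Ioo 0 ξp) := by
    intro x hx y hy h
    have h1 : ¬ |x| < |y| := fun hl => (Real.cosh_lt_cosh.mpr hl).ne h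
    have h2 : ¬ |y| < |x| := fun hl => (Real.cosh_lt_cosh.mpr hl).ne' h
    have h3 : |x| = |y| := le_antisymm (not_lt.mp h2) (not_lt.mp h1)
    rwa [abs_of_pos hx.1, abs_of_pos hy.1] at h3
  -- the c-integrand
  obtain ⟨F, hFdef⟩ : ∃ f : ℝ → ℝ,
      f = fun x => 1 / Real.sqrt ((x - b * x ^ 2 - A) * (x ^ 2 - 1)) := ⟨_, rfl⟩
  -- pointwise identity for the cosh substitution
  have hptA : ∀ ξ ∈ Ioo (0:ℝ) ξp, |Real.sinh ξ| • F (Real.cosh ξ)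
      = 1 / Real.sqrt (Real.cosh ξ - b * Real.cosh ξ ^ 2 - A) := by
    intro ξ hξ
    have hsh : 0 < Real.sinh ξ := Real.sinh_pos_iff.mpr hξ.1
    have hcosh1 : 1 ≤ Real.cosh ξ := Real.one_le_cosh ξ
    have hcoshlt : Real.cosh ξ < cp := by
      rw [← hcosh]
      exact Real.cosh_lt_cosh.mpr (by rw [abs_of_pos hξ.1, abs_of_pos hξp]; exact hξ.2)
    have hq : 0 < Real.cosh ξ - b * Real.cosh ξ ^ 2 - A := hqpos _ hcosh1 hcoshlt
    have hsq : Real.cosh ξ ^ 2 - 1 = Real.sinh ξ ^ 2 := by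
      have := Real.cosh_sq ξ; linarith
    rw [hFdef]
    simp only [smul_eq_mul]
    rw [hsq, Real.sqrt_mul hq.le, Real.sqrt_sq hsh.le, abs_of_pos hsh]
    have hne : Real.sqrt (Real.cosh ξ - b * Real.cosh ξ ^ 2 - A) ≠ 0 :=
      (Real.sqrt_pos.mpr hq).ne'
    field_simp
  have stepA : (∫ x in Ioo (1:ℝ) cp, F x)
      = ∫ ξ in Ioo (0:ℝ) ξp, 1 / Real.sqrt (Real.cosh ξ - b * Real.cosh ξ ^ 2 - A) := by
    rw [← hcoshim, integral_image_eq_integral_abs_deriv_smul measurableSet_Ioo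
      (fun x _ => (Real.hasDerivAt_cosh x).hasDerivWithinAt) hcoshinj F]
    exact setIntegral_congr_fun measurableSet_Ioo hptA
  -- modulus bounds
  have hAlt : A < b + s := by
    nlinarith [hA4, mul_pos (by linarith : (0:ℝ) < 2 * b - (1 - s)) (by linarith : (0:ℝ) < 1 + s),
      mul_pos hb (by linarith : (0:ℝ) < 2 * b + s - 1)]
  have hk21 : k ^ 2 < 1 := by
    rw [hk2, div_lt_one (by linarith)]
    linarith
  -- pointwise identity for the rational substitution
  have hptB : ∀ v ∈ Ioo (0:ℝ) 1, |c' v| • F (c v)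
      = Real.sqrt (2 / s) * (1 / Real.sqrt ((1 - v ^ 2) * (1 - k ^ 2 * v ^ 2))) := by
    intro v hv
    have hdv := hdIoo v hv
    have hv2 : v ^ 2 < 1 := by nlinarith [hv.1, hv.2]
    have hW1 : 0 < 1 - v ^ 2 := by linarith
    have hW2 : 0 < 1 - k ^ 2 * v ^ 2 := by
      have h := mul_le_of_le_one_right (sq_nonneg k) hv2.le
      linarith [hk21]
    have hW : 0 < (1 - v ^ 2) * (1 - k ^ 2 * v ^ 2) := mul_pos hW1 hW2
    have h1c := hcv1 v hv
    have hccp := hcvcp v hv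
    have hq : 0 < c v - b * (c v) ^ 2 - A := hqpos _ h1c.le hccp
    have hsq : 0 < (c v) ^ 2 - 1 := by nlinarith [h1c]
    have hR : 0 < (c v - b * (c v) ^ 2 - A) * ((c v) ^ 2 - 1) := mul_pos hq hsq
    have hc'pos : 0 < c' v := by
      rw [hc'def]
      exact div_pos
        (mul_pos (mul_pos (mul_pos (mul_pos two_pos hs0) hm0) hp0) hv.1)
        (mul_pos hb (pow_pos hdv 2))
    have hdvne : 2 * s - (1 + s - 2 * b) * v ^ 2 ≠ 0 := by
      have h := hdv
      simp only [hddef] at h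
      rw [hpdef] at h
      exact h.ne'
    have hRid : (c' v) ^ 2 * (s * ((1 - v ^ 2) * (1 - k ^ 2 * v ^ 2)))
        = 2 * ((c v - b * (c v) ^ 2 - A) * ((c v) ^ 2 - 1)) := by
      rw [hk2, hAeq]
      simp only [hc'def, hcdef, hddef]
      rw [hcmdef, hpdef, hmdef]
      field_simp
      ring
    rw [hFdef]
    simp only [smul_eq_mul]
    rw [abs_of_pos hc'pos]
    rw [show c' v = Real.sqrt ((c' v) ^ 2) from (Real.sqrt_sq hc'pos.le).symm]
    rw [one_div, ← Real.sqrt_inv, ← Real.sqrt_mul (sq_nonneg (c' v))]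
    rw [one_div, ← Real.sqrt_inv, ← Real.sqrt_mul (by positivity : (0:ℝ) ≤ 2 / s)]
    congr 1
    rw [← div_eq_mul_inv, ← div_eq_mul_inv, div_div, div_eq_div_iff hR.ne' (mul_ne_zero hs0.ne' hW.ne')]
    linear_combination hRid
  have stepB : (∫ x in Ioo (1:ℝ) cp, F x)
      = ∫ v in Ioo (0:ℝ) 1,
          Real.sqrt (2 / s) * (1 / Real.sqrt ((1 - v ^ 2) * (1 - k ^ 2 * v ^ 2))) := by
    rw [← himage, integral_image_eq_integral_abs_deriv_smul measurableSet_Ioo hderiv hinj F]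
    exact setIntegral_congr_fun measurableSet_Ioo hptB
  
  -- integrability of the elliptic integrand on (0,1)
  have h1k2 : 0 < 1 - k ^ 2 := by linarith [hk21]
  have hWint : IntegrableOn
      (fun v => 1 / Real.sqrt ((1 - v ^ 2) * (1 - k ^ 2 * v ^ 2))) (Ioo (0:ℝ) 1) := by
    have hrpow : IntervalIntegrable (fun x : ℝ => x ^ (-(1/2) : ℝ)) volume 0 1 :=
      intervalIntegral.intervalIntegrable_rpow' (by norm_num)
    have hb1 : IntervalIntegrable (fun x : ℝ => (1 - x) ^ (-(1/2) : ℝ)) volume 0 1 := by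
      have h := (hrpow.comp_sub_left 1).symm
      norm_num at h
      exact h
    have hb2 : IntegrableOn
        (fun x : ℝ => (1 / Real.sqrt (1 - k ^ 2)) * (1 - x) ^ (-(1/2) : ℝ)) (Ioo (0:ℝ) 1) := by
      have h := hb1.const_mul (1 / Real.sqrt (1 - k ^ 2))
      rw [intervalIntegrable_iff_integrableOn_Ioo_of_le (by norm_num : (0:ℝ) ≤ 1)] at h
      exact h
    apply Integrable.mono' hb2
    · apply Measurable.aestronglyMeasurable
      apply Measurable.div measurable_const
      exact (Real.continuous_sqrt.comp
        ((continuous_const.sub (continuous_pow 2)).mul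
          (continuous_const.sub (continuous_const.mul (continuous_pow 2))))).measurable
    · filter_upwards [ae_restrict_mem measurableSet_Ioo] with v hv
      have hv2 : v ^ 2 < 1 := by nlinarith [hv.1, hv.2]
      have hW1 : 0 < 1 - v := by linarith [hv.2]
      have hW1' : 0 < 1 - v ^ 2 := by linarith
      have hW2 : 0 < 1 - k ^ 2 * v ^ 2 := by
        have h := mul_le_of_le_one_right (sq_nonneg k) hv2.le
        linarith [hk21]
      have hmono : (1 - v) * (1 - k ^ 2) ≤ (1 - v ^ 2) * (1 - k ^ 2 * v ^ 2) := by
        have h1 : 1 - v ≤ 1 - v ^ 2 := by nlinarith [hv.1, hv.2]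
        have h2 : 1 - k ^ 2 ≤ 1 - k ^ 2 * v ^ 2 := by
          have := mul_le_of_le_one_right (sq_nonneg k) hv2.le
          linarith
        exact mul_le_mul h1 h2 (by linarith) (by linarith)
      have hrw : (1 - v) ^ (-(1/2) : ℝ) = 1 / Real.sqrt (1 - v) := by
        rw [Real.rpow_neg hW1.le, Real.sqrt_eq_rpow]
        norm_num
      rw [hrw]
      have hnorm : ‖1 / Real.sqrt ((1 - v ^ 2) * (1 - k ^ 2 * v ^ 2))‖
          = 1 / Real.sqrt ((1 - v ^ 2) * (1 - k ^ 2 * v ^ 2)) := by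
        rw [Real.norm_eq_abs, abs_of_nonneg (by positivity)]
      rw [hnorm]
      rw [div_mul_div_comm, one_mul, ← Real.sqrt_mul h1k2.le]
      apply one_div_le_one_div_of_le
      · apply Real.sqrt_pos.mpr
        exact mul_pos h1k2 hW1
      · apply Real.sqrt_le_sqrt
        calc (1 - k ^ 2) * (1 - v) = (1 - v) * (1 - k ^ 2) := by ring
          _ ≤ (1 - v ^ 2) * (1 - k ^ 2 * v ^ 2) := hmono
  -- transfer integrability back along the substitutions
  have hVint : IntegrableOn (fun v => |c' v| • F (c v)) (Ioo (0:ℝ) 1) := by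
    apply IntegrableOn.congr_fun ?_ (fun v hv => (hptB v hv).symm) measurableSet_Ioo
    exact hWint.const_mul _
  have hFint : IntegrableOn F (Ioo (1:ℝ) cp) := by
    rw [← himage,
      integrableOn_image_iff_integrableOn_abs_deriv_smul measurableSet_Ioo hderiv hinj F]
    exact hVint
  have hGint : IntegrableOn
      (fun ξ => 1 / Real.sqrt (Real.cosh ξ - b * Real.cosh ξ ^ 2 - A)) (Ioo (0:ℝ) ξp) := by
    have h := (integrableOn_image_iff_integrableOn_abs_deriv_smul measurableSet_Ioo
      (fun x _ => (Real.hasDerivAt_cosh x).hasDerivWithinAt) hcoshinj F).mp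
      (by rw [hcoshim]; exact hFint)
    exact IntegrableOn.congr_fun h hptA measurableSet_Ioo
  have hGii : IntervalIntegrable
      (fun ξ => 1 / Real.sqrt (Real.cosh ξ - b * Real.cosh ξ ^ 2 - A)) volume 0 ξp :=
    (intervalIntegrable_iff_integrableOn_Ioo_of_le hξp.le).mpr hGint
  have hGeven : (fun x : ℝ => 1 / Real.sqrt (Real.cosh (-x) - b * Real.cosh (-x) ^ 2 - A))
      = fun ξ => 1 / Real.sqrt (Real.cosh ξ - b * Real.cosh ξ ^ 2 - A) := by
    funext x
    rw [Real.cosh_neg]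
  have hGii2 : IntervalIntegrable
      (fun ξ => 1 / Real.sqrt (Real.cosh ξ - b * Real.cosh ξ ^ 2 - A)) volume (-ξp) 0 := by
    have h := ((IntervalIntegrable.iff_comp_neg).mp hGii)
    rw [hGeven] at h
    have h2 := h.symm
    rw [neg_zero] at h2
    exact h2
  -- symmetry of the integral
  have hsymm : (∫ ξ in (-ξp)..0, 1 / Real.sqrt (Real.cosh ξ - b * Real.cosh ξ ^ 2 - A))
      = ∫ ξ in (0:ℝ)..ξp, 1 / Real.sqrt (Real.cosh ξ - b * Real.cosh ξ ^ 2 - A) := by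
    have h := intervalIntegral.integral_comp_neg
      (fun ξ => 1 / Real.sqrt (Real.cosh ξ - b * Real.cosh ξ ^ 2 - A)) (a := 0) (b := ξp)
    simp only [hGeven, neg_zero] at h
    exact h.symm
  -- identification with K
  have hKk : K k = ∫ v in Ioo (0:ℝ) 1, 1 / Real.sqrt ((1 - v ^ 2) * (1 - k ^ 2 * v ^ 2)) := by
    rw [K, intervalIntegral.integral_of_le (by norm_num : (0:ℝ) ≤ 1),
      integral_Ioc_eq_integral_Ioo]
  -- assembly
  calc (∫ ξ in -ξp..ξp, 1 / Real.sqrt (Real.cosh ξ - b * Real.cosh ξ ^ 2 - A))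
      = (∫ ξ in (-ξp)..0, 1 / Real.sqrt (Real.cosh ξ - b * Real.cosh ξ ^ 2 - A))
        + ∫ ξ in (0:ℝ)..ξp, 1 / Real.sqrt (Real.cosh ξ - b * Real.cosh ξ ^ 2 - A) :=
        (intervalIntegral.integral_add_adjacent_intervals hGii2 hGii).symm
    _ = 2 * ∫ ξ in (0:ℝ)..ξp, 1 / Real.sqrt (Real.cosh ξ - b * Real.cosh ξ ^ 2 - A) := by
        rw [hsymm]; ring
    _ = 2 * ∫ ξ in Ioo (0:ℝ) ξp, 1 / Real.sqrt (Real.cosh ξ - b * Real.cosh ξ ^ 2 - A) := by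
        rw [intervalIntegral.integral_of_le hξp.le, integral_Ioc_eq_integral_Ioo]
    _ = 2 * ∫ x in Ioo (1:ℝ) cp, F x := by rw [stepA]
    _ = 2 * ∫ v in Ioo (0:ℝ) 1,
          Real.sqrt (2 / s) * (1 / Real.sqrt ((1 - v ^ 2) * (1 - k ^ 2 * v ^ 2))) := by
        rw [stepB]
    _ = 2 * (Real.sqrt (2 / s)
          * ∫ v in Ioo (0:ℝ) 1, 1 / Real.sqrt ((1 - v ^ 2) * (1 - k ^ 2 * v ^ 2))) := by
        rw [integral_const_mul]
    _ = 2 * Real.sqrt (2 / s) * K k := by rw [hKk]; ring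

/-- The modulus `κ₁(β, A₁)`, defined by
`κ₁² = (A₁(1-β) + √(1-4βA₁²)) / (2√(1-4βA₁²))`. -/
noncomputable def κ₁ (β A₁ : ℝ) : ℝ :=
  Real.sqrt ((A₁ * (1 - β) + Real.sqrt (1 - 4 * β * A₁ ^ 2)) /
    (2 * Real.sqrt (1 - 4 * β * A₁ ^ 2)))

/-- The modulus `κ₂(β)`, defined by `κ₂² = β/(1+β)`. -/
noncomputable def κ₂ (β : ℝ) : ℝ := Real.sqrt (β / (1 + β))

/-- The period `T₁(β,A₁) = 2√(2/a) (1-4βA₁²)^{-1/4} K(κ₁(β,A₁))` of the ξ-motion. -/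
noncomputable def T₁ (a β A₁ : ℝ) : ℝ :=
  2 * Real.sqrt (2 / a) / (1 - 4 * β * A₁ ^ 2) ^ ((1:ℝ)/4) * K (κ₁ β A₁)

/-- The period `T₂(β,A₁) = 2/√(a A₁ (1+β)) · K(κ₂(β))` of the φ-motion. -/
noncomputable def T₂ (a β A₁ : ℝ) : ℝ :=
  2 / Real.sqrt (a * A₁ * (1 + β)) * K (κ₂ β)

set_option maxHeartbeats 1000000 in
/-- The period of the one-dimensional motion `(ξ')² = 4a(cosh ξ - βA₁ cosh²ξ - A₁)`
between the inversion points `±ξ₊` equals `T₁(β,A₁)`. -/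
theorem xi_period_eq_T₁ (a : ℝ) (ha : 0 < a) (β : ℝ) (hβ : β ∈ Set.Ioo (0:ℝ) 1)
    (A₁ : ℝ) (hA : A₁ ∈ Set.Ioo 0 (1 / (1 + β)))
    (ξp : ℝ) (hξp : 0 < ξp)
    (hcosh : Real.cosh ξp = (1 + Real.sqrt (1 - 4 * β * A₁ ^ 2)) / (2 * β * A₁)) :
    (∀ ξ ∈ Set.Ioo (-ξp) ξp, 0 < Real.cosh ξ - β * A₁ * Real.cosh ξ ^ 2 - A₁) ∧
    (1 / Real.sqrt a) *
      (∫ ξ in -ξp..ξp, 1 / Real.sqrt (Real.cosh ξ - β * A₁ * Real.cosh ξ ^ 2 - A₁))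
      = T₁ a β A₁ := by
  obtain ⟨hβ0, hβ1⟩ := hβ
  obtain ⟨hA0, hA1u⟩ := hA
  have h1β : (0:ℝ) < 1 + β := by linarith
  have hA1 : A₁ * (1 + β) < 1 := by rwa [lt_div_iff₀ h1β] at hA1u
  have hb : 0 < β * A₁ := mul_pos hβ0 hA0
  have hΔ : 0 < 1 - 4 * β * A₁ ^ 2 := by
    nlinarith [mul_pos (by nlinarith : (0:ℝ) < 1 - A₁ * (1 + β))
      (by nlinarith : (0:ℝ) < 1 + A₁ * (1 + β)), sq_nonneg ((1 - β) * A₁)]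
  obtain ⟨s, hsdef⟩ : ∃ x : ℝ, x = Real.sqrt (1 - 4 * β * A₁ ^ 2) := ⟨_, rfl⟩
  have hs0 : 0 < s := by rw [hsdef]; exact Real.sqrt_pos.mpr hΔ
  have hs2 : s ^ 2 = 1 - 4 * β * A₁ ^ 2 := by rw [hsdef]; exact Real.sq_sqrt hΔ.le
  have hs1 : s < 1 := by nlinarith [mul_pos hβ0 (mul_pos hA0 hA0)]
  have h2b : 2 * (β * A₁) < 1 := by nlinarith [mul_pos hβ0 hA0]
  have hmb : 1 - s < 2 * (β * A₁) := by
    rcases le_or_gt (1 - 2 * (β * A₁)) 0 with h | h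
    · linarith
    · nlinarith [hs2, hs0, mul_pos hb (by nlinarith : (0:ℝ) < 1 - A₁ * (1 + β))]
  have hA4 : 4 * (β * A₁) * A₁ = 1 - s ^ 2 := by rw [hs2]; ring
  have hcosh' : Real.cosh ξp = (1 + s) / (2 * (β * A₁)) := by
    rw [hcosh, hsdef]; ring_nf
  have hk0 : 0 ≤ κ₁ β A₁ := Real.sqrt_nonneg _
  have hk2 : (κ₁ β A₁) ^ 2 = (A₁ - β * A₁ + s) / (2 * s) := by
    rw [κ₁, ← hsdef, Real.sq_sqrt]
    · congr 1
      ring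
    · apply div_nonneg
      · have := mul_nonneg hA0.le (by linarith : (0:ℝ) ≤ 1 - β)
        linarith
      · linarith
  constructor
  · intro ξ hξ
    have hcoshlt : Real.cosh ξ < (1 + s) / (2 * (β * A₁)) := by
      rw [← hcosh']
      apply Real.cosh_lt_cosh.mpr
      rw [abs_of_pos hξp]
      exact abs_lt.mpr ⟨hξ.1, hξ.2⟩
    have hcosh1 : 1 ≤ Real.cosh ξ := Real.one_le_cosh ξ
    have hcm1 : (1 - s) / (2 * (β * A₁)) < 1 := by
      rw [div_lt_one (by linarith)]; linarith
    have hfact : Real.cosh ξ - β * A₁ * Real.cosh ξ ^ 2 - A₁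
        = (β * A₁) * ((((1 + s) / (2 * (β * A₁))) - Real.cosh ξ)
          * (Real.cosh ξ - (1 - s) / (2 * (β * A₁)))) := by
      field_simp
      linear_combination (-1) * hA4
    rw [hfact]
    exact mul_pos hb (mul_pos (by linarith) (by linarith))
  · rw [core_integral (β * A₁) s ξp (κ₁ β A₁) A₁ hb hs0 hs1 h2b hmb hξp hA4 hcosh' hk0 hk2]
    rw [T₁, ← hs2]
    have hsq4 : ((s ^ 2 : ℝ)) ^ ((1:ℝ)/4) = Real.sqrt s := by
      rw [← Real.rpow_natCast s 2, ← Real.rpow_mul hs0.le]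
      norm_num
      rw [Real.sqrt_eq_rpow]
    have h2s : Real.sqrt (2 / s) = Real.sqrt 2 / Real.sqrt s := Real.sqrt_div (by norm_num) s
    have h2a : Real.sqrt (2 / a) = Real.sqrt 2 / Real.sqrt a := Real.sqrt_div (by norm_num) a
    rw [hsq4, h2s, h2a]
    ring
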